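/- The group R4 = (C3 ≀ S8)^° ×_sign S24 × S24 has order 16972688908618238933770849245964147960401887232000000000. -/

import Mathlib

open Equiv

/-- The automorphism of `(Z/n)^m` (written multiplicatively) permuting coordinates by `σ`. -/
def permAut (n m : ℕ) (σ : Equiv.Perm (Fin m)) :
    MulAut (Fin m → Multiplicative (ZMod n)) :=
  { Equiv.piCongrLeft' (fun _ => Multiplicative (ZMod n)) σ with
    map_mul' := fun _ _ => rfl }

/-- The action of `S_m` on `(Z/n)^m` permuting coordinates. -/
def permHom (n m : ℕ) : Equiv.Perm (Fin m) →* MulAut (Fin m → Multiplicative (ZMod n)) where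
  toFun := permAut n m
  map_one' := by ext x i; rfl
  map_mul' := fun σ τ => by ext x i; rfl

/-- The wreath product `C_n ≀ S_m = (Z/n)^m ⋊ S_m`, where `S_m` permutes coordinates. -/
abbrev Wr (n m : ℕ) :=
  SemidirectProduct (Fin m → Multiplicative (ZMod n)) (Equiv.Perm (Fin m)) (permHom n m)

/-- The homomorphism `C_n ≀ S_m → Z/n`, `(x, σ) ↦ ∑ i, x i`. -/
def sumHom (n m : ℕ) : Wr n m →* Multiplicative (ZMod n) :=
  SemidirectProduct.lift
    (MonoidHom.mk' (fun x => ∏ i, x i) (by intro a b; simp [Finset.prod_mul_distrib]))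
    1
    (by
      intro σ
      refine MonoidHom.ext fun x => ?_
      first
        | simpa using Equiv.prod_comp σ.symm x
        | (simp; exact Equiv.prod_comp σ.symm x)
        | exact Equiv.prod_comp σ.symm x)

/-- `(C_n ≀ S_m)^°`, the kernel of `(x, σ) ↦ ∑ i, x i`. -/
abbrev WrO (n m : ℕ) : Subgroup (Wr n m) := (sumHom n m).ker

/-- The sign homomorphism `(C_n ≀ S_m)^° → {±1}`, `(x, σ) ↦ sign σ`. -/
def signW (n m : ℕ) : ↥(WrO n m) →* ℤˣ :=
  (Equiv.Perm.sign.comp SemidirectProduct.rightHom).comp (WrO n m).subtype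

/-- The fiber product `G ×_{φ,ψ} H = {(a, b) : φ a = ψ b}` of two group homomorphisms,
as a subgroup of the direct product `G × H`. -/
def fiberProduct {G H K : Type*} [Group G] [Group H] [Group K]
    (φ : G →* K) (ψ : H →* K) : Subgroup (G × H) where
  carrier := {p | φ p.1 = ψ p.2}
  one_mem' := by simp
  mul_mem' := by
    intro a b ha hb
    simp only [Set.mem_setOf_eq, Prod.fst_mul, Prod.snd_mul, map_mul] at *
    rw [ha, hb]
  inv_mem' := by
    intro a ha
    simp only [Set.mem_setOf_eq, Prod.fst_inv, Prod.snd_inv, map_inv] at *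
    rw [ha]

/-- The Revenge Cube group `R4 = ((C3 ≀ S8)^° ×_sign S24) × S24`. -/
abbrev RevengeR4 :=
  ↥(fiberProduct (signW 3 8) (Equiv.Perm.sign : Equiv.Perm (Fin 24) →* ℤˣ)) ×
    Equiv.Perm (Fin 24)

lemma card_ker_of_surj {G K : Type*} [Group G] [Group K] (f : G →* K)
    (hf : Function.Surjective f) : Nat.card G = Nat.card K * Nat.card f.ker := by
  rw [Subgroup.card_eq_card_quotient_mul_card_subgroup f.ker,
    Nat.card_congr (QuotientGroup.quotientKerEquivOfSurjective f hf).toEquiv]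

lemma card_sdp {N G : Type*} [Group N] [Group G] (φ : G →* MulAut N) :
    Nat.card (SemidirectProduct N G φ) = Nat.card N * Nat.card G := by
  rw [← Nat.card_prod]
  exact Nat.card_congr ⟨fun x => (x.left, x.right), fun p => ⟨p.1, p.2⟩,
    fun x => rfl, fun p => rfl⟩

lemma sumHom_surj : Function.Surjective (sumHom 3 8) := by
  intro g
  refine ⟨SemidirectProduct.inl (Pi.mulSingle 0 g), ?_⟩
  rw [sumHom, SemidirectProduct.lift_inl]
  simpa using Fintype.prod_pi_mulSingle (0 : Fin 8) (fun _ => g)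

lemma card_WrO : Nat.card (WrO 3 8) = 3 ^ 7 * Nat.factorial 8 := by
  have h := card_ker_of_surj (sumHom 3 8) sumHom_surj
  rw [card_sdp] at h
  simp only [Nat.card_eq_fintype_card, Fintype.card_pi, Fintype.card_perm,
    Fintype.card_fin] at h
  have h3 : Fintype.card (Multiplicative (ZMod 3)) = 3 := rfl
  rw [h3] at h
  show Nat.card ((sumHom 3 8).ker) = 3 ^ 7 * Nat.factorial 8
  norm_num [Nat.factorial] at h ⊢
  omega

/-- The difference homomorphism whose kernel is the fiber product. -/
def diffHom {G H : Type*} [Group G] [Group H]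
    (φ : G →* ℤˣ) (ψ : H →* ℤˣ) : G × H →* ℤˣ :=
  (φ.comp (MonoidHom.fst G H)) * (ψ.comp (MonoidHom.snd G H))⁻¹

lemma fiberProduct_eq_ker {G H : Type*} [Group G] [Group H]
    (φ : G →* ℤˣ) (ψ : H →* ℤˣ) : fiberProduct φ ψ = (diffHom φ ψ).ker := by
  ext p
  simp only [fiberProduct, Subgroup.mem_mk, Submonoid.mem_mk, Subsemigroup.mem_mk, Set.mem_setOf_eq, MonoidHom.mem_ker,
    diffHom, MonoidHom.mul_apply, MonoidHom.inv_apply, MonoidHom.coe_comp,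
    Function.comp_apply, MonoidHom.coe_fst, MonoidHom.coe_snd, mul_inv_eq_one]

/-- The Revenge Cube group `R4 = ((C3 ≀ S8)^° ×_sign S24) × S24` has order
`16972688908618238933770849245964147960401887232000000000`. -/
theorem revenge_R4_card :
    Nat.card RevengeR4 =
      16972688908618238933770849245964147960401887232000000000 := by
  have hsurj : Function.Surjective
      (diffHom (signW 3 8) (Equiv.Perm.sign : Equiv.Perm (Fin 24) →* ℤˣ)) := by
    intro u
    obtain ⟨σ, hσ⟩ := Equiv.Perm.sign_surjective (Fin 24) u⁻¹
    exact ⟨(1, σ), by simp [diffHom, hσ]⟩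
  have h := card_ker_of_surj _ hsurj
  rw [Nat.card_prod, card_WrO, ← fiberProduct_eq_ker] at h
  simp only [Nat.card_eq_fintype_card, Fintype.card_perm, Fintype.card_fin,
    Fintype.card_units_int] at h
  rw [Nat.card_prod]
  simp only [Nat.card_eq_fintype_card, Fintype.card_perm, Fintype.card_fin]
  norm_num [Nat.factorial] at h ⊢
  linarith
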